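/- arXiv:2502.10551 — 2 statements merged into one kernel-verified Lean document; each statement's English description precedes it below -/
import Mathlib

section
/- Suppose p is a mixed Hider strategy with p_a = 0 for some box a, and ξ is a Searcher sequence with ξ(k) = a for some k ∈ ℕ. Let ξ' be the sequence obtained from ξ by deleting the look at position k (ξ'(i) = ξ(i) for i < k and ξ'(i) = ξ(i+1) for i ≥ k). Then u(p,ξ') ≤ u(p,ξ); moreover, if u(p,ξ) < ∞ and q_j < 1 for every j, then u(p,ξ') < u(p,ξ). -/
open scoped ENNReal

/-- `looks ξ j k` = number of looks in box `j` among the first `k` looks of `ξ`. -/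
def looks {n : ℕ} (ξ : ℕ → Fin n) (j : Fin n) (k : ℕ) : ℕ :=
  ((Finset.range k).filter (fun i => ξ i = j)).card

/-- Expected search time (in `[0,∞]`) to find a target hidden in box `j`, when the boxes
have search times `t` and detection probabilities `q`, and the Searcher uses the
sequence `ξ`. -/
noncomputable def searchTime {n : ℕ} (t q : Fin n → ℝ) (j : Fin n) (ξ : ℕ → Fin n) : ℝ≥0∞ :=
  ∑' k : ℕ, ENNReal.ofReal (t (ξ k) * (1 - q j) ^ looks ξ j k)

/-- Expected search time against the mixed Hider strategy `p`. -/
noncomputable def mixedSearchTime {n : ℕ} (t q : Fin n → ℝ) (p : Fin n → ℝ)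
    (ξ : ℕ → Fin n) : ℝ≥0∞ :=
  ∑ j : Fin n, ENNReal.ofReal (p j) * searchTime t q j ξ

lemma looks_succ {n : ℕ} (ξ : ℕ → Fin n) (j : Fin n) (i : ℕ) :
    looks ξ j (i+1) = looks ξ j i + (if ξ i = j then 1 else 0) := by
  unfold looks
  rw [Finset.range_add_one, Finset.filter_insert]
  split
  · rw [Finset.card_insert_of_notMem (by simp)]
  · simp

lemma looks_agree {n : ℕ} (ξ ξ' : ℕ → Fin n) (j : Fin n) (i : ℕ)
    (h : ∀ m < i, ξ' m = ξ m) : looks ξ' j i = looks ξ j i := by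
  unfold looks
  congr 1
  apply Finset.filter_congr
  intro m hm
  rw [h m (Finset.mem_range.mp hm)]

lemma looks_del {n : ℕ} (ξ ξ' : ℕ → Fin n) (k : ℕ)
    (hξ' : ∀ i, ξ' i = if i < k then ξ i else ξ (i + 1))
    (j : Fin n) (hj : ξ k ≠ j) :
    ∀ i, k ≤ i → looks ξ' j i = looks ξ j (i+1) := by
  intro i hi
  induction i, hi using Nat.le_induction with
  | base =>
      rw [looks_agree ξ ξ' j k (fun m hm => by rw [hξ' m, if_pos hm]),
        looks_succ, if_neg hj, Nat.add_zero]
  | succ i hi ih =>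
      simp [looks_succ, ih, hξ' i, Nat.not_lt.mpr hi]

lemma searchTime_del {n : ℕ} (t q : Fin n → ℝ) (ξ ξ' : ℕ → Fin n) (k : ℕ)
    (hξ' : ∀ i, ξ' i = if i < k then ξ i else ξ (i + 1))
    (j : Fin n) (hj : ξ k ≠ j) :
    searchTime t q j ξ =
      searchTime t q j ξ' + ENNReal.ofReal (t (ξ k) * (1 - q j) ^ looks ξ j k) := by
  set g : ℕ → ℝ≥0∞ := fun i => ENNReal.ofReal (t (ξ i) * (1 - q j) ^ looks ξ j i) with hg
  set g' : ℕ → ℝ≥0∞ := fun i => ENNReal.ofReal (t (ξ' i) * (1 - q j) ^ looks ξ' j i) with hg'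
  have hlt : ∀ i < k, g' i = g i := by
    intro i hik
    simp only [hg, hg']
    rw [hξ' i, if_pos hik, looks_agree ξ ξ' j i (fun m hm => by rw [hξ' m, if_pos (by omega)])]
  have hge : ∀ i, g' (i + k) = g (i + (k + 1)) := by
    intro i
    simp only [hg, hg']
    rw [hξ' (i + k), if_neg (by omega), looks_del ξ ξ' k hξ' j hj (i + k) (by omega),
      Nat.add_assoc]
  have h1 : searchTime t q j ξ = ∑ i ∈ Finset.range (k+1), g i + ∑' i, g (i + (k+1)) :=
    (Summable.sum_add_tsum_nat_add' ENNReal.summable).symm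
  have h2 : searchTime t q j ξ' = ∑ i ∈ Finset.range k, g' i + ∑' i, g' (i + k) :=
    (Summable.sum_add_tsum_nat_add' ENNReal.summable).symm
  rw [h1, h2, Finset.sum_range_succ,
    Finset.sum_congr rfl (fun i hi => (hlt i (Finset.mem_range.mp hi)).symm),
    tsum_congr hge]
  exact add_right_comm _ _ _

/-- if `p` assigns probability `0` to box `a` and `ξ` looks in box `a` at
position `k`, then deleting that look yields a sequence `ξ'` with
`u(p,ξ') ≤ u(p,ξ)`; moreover, if `u(p,ξ) < ∞` and every detection probability is
less than `1`, the inequality is strict. -/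
theorem delete_useless_look
    {n : ℕ} (t q : Fin n → ℝ) (ht : ∀ j, 0 < t j) (hq0 : ∀ j, 0 < q j) (hq1 : ∀ j, q j ≤ 1)
    (p : Fin n → ℝ) (hp0 : ∀ j, 0 ≤ p j) (hp1 : ∑ j, p j = 1)
    (a : Fin n) (hpa : p a = 0)
    (ξ : ℕ → Fin n) (k : ℕ) (hk : ξ k = a)
    (ξ' : ℕ → Fin n) (hξ' : ∀ i, ξ' i = if i < k then ξ i else ξ (i + 1)) :
    mixedSearchTime t q p ξ' ≤ mixedSearchTime t q p ξ ∧
      (mixedSearchTime t q p ξ < ⊤ → (∀ j, q j < 1) →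
        mixedSearchTime t q p ξ' < mixedSearchTime t q p ξ) := by
  set c : Fin n → ℝ≥0∞ := fun j => ENNReal.ofReal (t (ξ k) * (1 - q j) ^ looks ξ j k) with hc
  have key : mixedSearchTime t q p ξ
      = mixedSearchTime t q p ξ' + ∑ j, ENNReal.ofReal (p j) * c j := by
    unfold mixedSearchTime
    rw [← Finset.sum_add_distrib]
    apply Finset.sum_congr rfl
    intro j _
    by_cases hja : j = a
    · subst hja; simp [hpa]
    · rw [searchTime_del t q ξ ξ' k hξ' j (by rw [hk]; exact fun h => hja h.symm), mul_add]
  constructor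
  · rw [key]; exact le_self_add
  · intro hfin hq1'
    obtain ⟨j₀, hj₀⟩ : ∃ j, 0 < p j := by
      by_contra h
      push_neg at h
      have : ∑ j, p j = 0 := Finset.sum_eq_zero fun j _ => le_antisymm (h j) (hp0 j)
      rw [hp1] at this; norm_num at this
    have hC : 0 < ∑ j, ENNReal.ofReal (p j) * c j := by
      refine lt_of_lt_of_le ?_ (Finset.single_le_sum (fun j _ => zero_le) (Finset.mem_univ j₀))
      apply ENNReal.mul_pos
      · exact (ENNReal.ofReal_pos.mpr hj₀).ne'
      · refine (ENNReal.ofReal_pos.mpr ?_).ne'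
        exact mul_pos (ht _) (pow_pos (by linarith [hq1' j₀]) _)
    have hfin' : mixedSearchTime t q p ξ' ≠ ⊤ := by
      refine ne_top_of_le_ne_top hfin.ne ?_
      rw [key]; exact le_self_add
    rw [key]
    exact ENNReal.lt_add_right hfin' hC.ne'
end

section
/- Assume q_j < 1 for all j and fix a mixed Hider strategy p. Suppose ξ* is a Searcher sequence such that (a) every box j with p_j > 0 appears infinitely often in ξ*, and (b) the indices are non-increasing along ξ*: for every k ∈ ℕ, ψ_{ξ*(k), N_{ξ*(k)}(ξ*,k)+1} ≥ ψ_{ξ*(k+1), N_{ξ*(k+1)}(ξ*,k+1)+1}. Then ξ* minimizes the expected search time against p: u(p,ξ*) ≤ u(p,ξ) for every Searcher sequence ξ. -/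
open scoped ENNReal

lemma looks_mono {n : ℕ} (ξ : ℕ → Fin n) (j : Fin n) : Monotone (looks ξ j) :=
  fun k k' h => Finset.card_le_card
    (Finset.filter_subset_filter _ (Finset.range_subset_range.2 h))

lemma looks_succ_of_eq {n : ℕ} {ξ : ℕ → Fin n} {j : Fin n} {k : ℕ} (h : ξ k = j) :
    looks ξ j (k + 1) = looks ξ j k + 1 := by
  unfold looks
  rw [Finset.range_add_one, Finset.filter_insert, if_pos h,
    Finset.card_insert_of_notMem (fun hk => by
      simpa using (Finset.mem_filter.1 hk).1)]

lemma looks_succ_le {n : ℕ} (ξ : ℕ → Fin n) (j : Fin n) (k : ℕ) :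
    looks ξ j (k + 1) ≤ looks ξ j k + 1 := by
  unfold looks
  rw [Finset.range_add_one, Finset.filter_insert]
  split
  · exact Finset.card_insert_le _ _
  · exact Nat.le_succ _

lemma looks_lt {n : ℕ} {ξ : ℕ → Fin n} {j : Fin n} {k k' : ℕ}
    (hk : ξ k = j) (h : k < k') : looks ξ j k < looks ξ j k' :=
  lt_of_lt_of_le (by rw [looks_succ_of_eq hk]; omega) (looks_mono ξ j h)

lemma sched_unique {n : ℕ} {ξ : ℕ → Fin n} {j : Fin n} {k k' : ℕ}
    (hk : ξ k = j) (hk' : ξ k' = j) (h : looks ξ j k = looks ξ j k') : k = k' := by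
  rcases lt_trichotomy k k' with hlt | he | hgt
  · exact absurd h (Nat.ne_of_lt (looks_lt hk hlt))
  · exact he
  · exact absurd h.symm (Nat.ne_of_lt (looks_lt hk' hgt))

lemma looks_le_iff {n : ℕ} {ξ : ℕ → Fin n} {j : Fin n} {m k₀ k : ℕ}
    (hj : ξ k₀ = j) (hm : looks ξ j k₀ = m) : looks ξ j k ≤ m ↔ k ≤ k₀ := by
  constructor
  · intro h
    by_contra hk
    push_neg at hk
    have := looks_lt hj hk
    omega
  · intro h
    rw [← hm]; exact looks_mono ξ j h

lemma exists_sched {n : ℕ} {ξ : ℕ → Fin n} {j : Fin n}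
    (h : {k : ℕ | ξ k = j}.Infinite) (m : ℕ) : ∃ k, ξ k = j ∧ looks ξ j k = m := by
  have hub : ∃ K, m + 1 ≤ looks ξ j K := by
    obtain ⟨s, hs, hcard⟩ := h.exists_subset_card_eq (m + 1)
    rcases s.eq_empty_or_nonempty with rfl | hne
    · simp at hcard
    · refine ⟨s.max' hne + 1, ?_⟩
      rw [← hcard]
      apply Finset.card_le_card
      intro x hx
      simp only [Finset.mem_filter, Finset.mem_range]
      exact ⟨Nat.lt_succ_of_le (s.le_max' x hx), hs hx⟩
  have hK1 : m + 1 ≤ looks ξ j (Nat.find hub) := Nat.find_spec hub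
  have hKpos : Nat.find hub ≠ 0 := by
    intro h0
    rw [h0] at hK1; unfold looks at hK1; simp at hK1
  obtain ⟨k, hKk⟩ := Nat.exists_eq_succ_of_ne_zero hKpos
  rw [hKk, Nat.succ_eq_add_one] at hK1
  have hlt : looks ξ j k < m + 1 := by
    by_contra hc
    push_neg at hc
    exact absurd hc (Nat.find_min hub (hKk ▸ Nat.lt_succ_self k))
  have hle := looks_succ_le ξ j k
  have hlm : looks ξ j k = m := by omega
  have hj : ξ k = j := by
    by_contra hc
    have : looks ξ j (k + 1) = looks ξ j k := by
      unfold looks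
      rw [Finset.range_add_one, Finset.filter_insert, if_neg hc]
    omega
  exact ⟨k, hj, hlm⟩

lemma geom_tail (r : ℝ≥0∞) (hr : r < 1) (N : ℕ) :
    (∑' m : ℕ, if N ≤ m then (1 - r) * r ^ m else 0) = r ^ N := by
  have h0 : (1 : ℝ≥0∞) - r ≠ 0 := (tsub_pos_of_lt hr).ne'
  have htop : (1 : ℝ≥0∞) - r ≠ ⊤ := ne_top_of_le_ne_top ENNReal.one_ne_top tsub_le_self
  have hinj : Function.Injective (fun i : ℕ => N + i) := fun a b h => by
    simpa using h
  rw [← Function.Injective.tsum_eq hinj (f := fun m : ℕ =>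
      if N ≤ m then (1 - r) * r ^ m else 0) ?_]
  · calc (∑' i : ℕ, if N ≤ N + i then (1 - r) * r ^ (N + i) else 0)
        = ∑' i : ℕ, ((1 - r) * r ^ N) * r ^ i := by
          refine tsum_congr fun i => ?_
          rw [if_pos (Nat.le_add_right N i), pow_add]; ring
      _ = ((1 - r) * r ^ N) * (1 - r)⁻¹ := by
          rw [ENNReal.tsum_mul_left, ENNReal.tsum_geometric]
      _ = r ^ N := by
          rw [mul_comm (1 - r) (r ^ N), mul_assoc, ENNReal.mul_inv_cancel h0 htop, mul_one]
  · intro m hm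
    simp only [Function.mem_support, ne_eq, ite_eq_right_iff, not_forall] at hm
    obtain ⟨hNm, -⟩ := hm
    exact ⟨m - N, by simp only []; omega⟩

noncomputable def BRW {n : ℕ} (q p : Fin n → ℝ) (a : Fin n × ℕ) : ℝ≥0∞ :=
  ENNReal.ofReal (p a.1 * (1 - q a.1) ^ a.2 * q a.1)

noncomputable def BRF {n : ℕ} (t q p : Fin n → ℝ) (ξ : ℕ → Fin n) (a b : Fin n × ℕ) : ℝ≥0∞ :=
  ∑' k : ℕ, if (ξ k = b.1 ∧ looks ξ b.1 k = b.2 ∧ looks ξ a.1 k ≤ a.2)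
    then BRW q p a * ENNReal.ofReal (t b.1) else 0

lemma BRW_decomp {n : ℕ} (t q p : Fin n → ℝ) (ht : ∀ j, 0 < t j) (hq1 : ∀ j, q j < 1)
    (hp0 : ∀ j, 0 ≤ p j) (j : Fin n) (m : ℕ) (x : Fin n) :
    BRW q p (j, m) * ENNReal.ofReal (t x) =
      (ENNReal.ofReal (p j) * ENNReal.ofReal (t x)) *
        ((1 - ENNReal.ofReal (1 - q j)) * (ENNReal.ofReal (1 - q j)) ^ m) := by
  have hq' : (0:ℝ) ≤ 1 - q j := by linarith [hq1 j]
  have hQ : 1 - ENNReal.ofReal (1 - q j) = ENNReal.ofReal (q j) := by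
    rw [← ENNReal.ofReal_one, ← ENNReal.ofReal_sub 1 hq']
    norm_num
  have hBRW : BRW q p (j, m) = ENNReal.ofReal (p j * (1 - q j) ^ m * q j) := rfl
  rw [hQ, hBRW, ENNReal.ofReal_mul (mul_nonneg (hp0 j) (pow_nonneg hq' m)),
    ENNReal.ofReal_mul (hp0 j), ENNReal.ofReal_pow hq']
  ring

lemma mixed_eq_sum_G {n : ℕ} (t q p : Fin n → ℝ) (ht : ∀ j, 0 < t j)
    (hq0 : ∀ j, 0 < q j) (hq1 : ∀ j, q j < 1) (hp0 : ∀ j, 0 ≤ p j) (ξ : ℕ → Fin n) :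
    mixedSearchTime t q p ξ = ∑' a : Fin n × ℕ, ∑' k : ℕ,
      (if looks ξ a.1 k ≤ a.2 then BRW q p a * ENNReal.ofReal (t (ξ k)) else 0) := by
  have heta : (∑' a : Fin n × ℕ, ∑' k : ℕ,
      (if looks ξ a.1 k ≤ a.2 then BRW q p a * ENNReal.ofReal (t (ξ k)) else 0)) =
      ∑' j : Fin n, ∑' m : ℕ, ∑' k : ℕ,
      (if looks ξ j k ≤ m then BRW q p (j, m) * ENNReal.ofReal (t (ξ k)) else 0) :=
    ENNReal.tsum_prod (f := fun j m => ∑' k : ℕ,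
      (if looks ξ j k ≤ m then BRW q p (j, m) * ENNReal.ofReal (t (ξ k)) else 0))
  rw [heta, tsum_fintype, mixedSearchTime]
  refine Finset.sum_congr rfl fun j _ => ?_
  have hq' : (0:ℝ) ≤ 1 - q j := by linarith [hq1 j]
  have hr1 : ENNReal.ofReal (1 - q j) < 1 := by
    rw [← ENNReal.ofReal_one]
    exact ENNReal.ofReal_lt_ofReal_iff_of_nonneg hq' |>.2 (by linarith [hq0 j])
  rw [ENNReal.tsum_comm (f := fun m k =>
    (if looks ξ j k ≤ m then BRW q p (j, m) * ENNReal.ofReal (t (ξ k)) else 0))]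
  rw [searchTime, ← ENNReal.tsum_mul_left]
  refine tsum_congr fun k => ?_
  rw [ENNReal.ofReal_mul (ht (ξ k)).le, ENNReal.ofReal_pow hq']
  calc ENNReal.ofReal (p j) * (ENNReal.ofReal (t (ξ k)) *
          (ENNReal.ofReal (1 - q j)) ^ looks ξ j k)
      = (ENNReal.ofReal (p j) * ENNReal.ofReal (t (ξ k))) *
          (ENNReal.ofReal (1 - q j)) ^ looks ξ j k := by ring
    _ = (ENNReal.ofReal (p j) * ENNReal.ofReal (t (ξ k))) *
          ∑' m : ℕ, (if looks ξ j k ≤ m then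
            (1 - ENNReal.ofReal (1 - q j)) * (ENNReal.ofReal (1 - q j)) ^ m else 0) := by
          rw [geom_tail _ hr1]
    _ = ∑' m : ℕ, (if looks ξ j k ≤ m then
            BRW q p (j, m) * ENNReal.ofReal (t (ξ k)) else 0) := by
          rw [← ENNReal.tsum_mul_left]
          refine tsum_congr fun m => ?_
          rw [mul_ite, mul_zero, BRW_decomp t q p ht hq1 hp0]

lemma sum_BRF_eq_G {n : ℕ} (t q p : Fin n → ℝ) (ξ : ℕ → Fin n) (a : Fin n × ℕ) :
    ∑' b : Fin n × ℕ, BRF t q p ξ a b =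
      ∑' k : ℕ, (if looks ξ a.1 k ≤ a.2 then BRW q p a * ENNReal.ofReal (t (ξ k)) else 0) := by
  unfold BRF
  rw [ENNReal.tsum_comm (f := fun (b : Fin n × ℕ) (k : ℕ) =>
    if (ξ k = b.1 ∧ looks ξ b.1 k = b.2 ∧ looks ξ a.1 k ≤ a.2)
      then BRW q p a * ENNReal.ofReal (t b.1) else 0)]
  refine tsum_congr fun k => ?_
  have hfun : ∀ b : Fin n × ℕ,
      (if (ξ k = b.1 ∧ looks ξ b.1 k = b.2 ∧ looks ξ a.1 k ≤ a.2)
        then BRW q p a * ENNReal.ofReal (t b.1) else 0) =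
      (if b = (ξ k, looks ξ (ξ k) k)
        then (if looks ξ a.1 k ≤ a.2 then BRW q p a * ENNReal.ofReal (t (ξ k)) else 0)
        else 0) := by
    intro b
    by_cases hbe : b = (ξ k, looks ξ (ξ k) k)
    · subst hbe
      by_cases hC : looks ξ a.1 k ≤ a.2 <;> simp [hC]
    · rw [if_neg hbe, if_neg]
      rintro ⟨h1, h2, -⟩
      exact hbe (Prod.ext_iff.2 ⟨h1.symm, by rw [← h2, h1]⟩)
  rw [tsum_congr hfun, tsum_ite_eq]

lemma mixed_eq_BRF {n : ℕ} (t q p : Fin n → ℝ) (ht : ∀ j, 0 < t j)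
    (hq0 : ∀ j, 0 < q j) (hq1 : ∀ j, q j < 1) (hp0 : ∀ j, 0 ≤ p j) (ξ : ℕ → Fin n) :
    mixedSearchTime t q p ξ =
      ∑' ab : (Fin n × ℕ) × (Fin n × ℕ), BRF t q p ξ ab.1 ab.2 := by
  rw [mixed_eq_sum_G t q p ht hq0 hq1 hp0 ξ, ENNReal.tsum_prod]
  exact tsum_congr fun a => (sum_BRF_eq_G t q p ξ a).symm

lemma BRF_eq_zero_of_W_eq_zero {n : ℕ} (t q p : Fin n → ℝ) (ξ : ℕ → Fin n)
    {a : Fin n × ℕ} (hW : BRW q p a = 0) (b : Fin n × ℕ) : BRF t q p ξ a b = 0 := by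
  unfold BRF
  simp [hW]

lemma BRF_eq_zero_of_not_sched {n : ℕ} (t q p : Fin n → ℝ) (ξ : ℕ → Fin n)
    (a : Fin n × ℕ) {b : Fin n × ℕ}
    (h : ∀ k, ¬(ξ k = b.1 ∧ looks ξ b.1 k = b.2)) : BRF t q p ξ a b = 0 := by
  unfold BRF
  convert tsum_zero with k
  rw [if_neg]
  rintro ⟨h1, h2, -⟩
  exact h k ⟨h1, h2⟩

lemma BRF_eq_of_sched {n : ℕ} (t q p : Fin n → ℝ) (ξ : ℕ → Fin n)
    {a b : Fin n × ℕ} {ka kb : ℕ}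
    (hja : ξ ka = a.1) (hma : looks ξ a.1 ka = a.2)
    (hjb : ξ kb = b.1) (hmb : looks ξ b.1 kb = b.2) :
    BRF t q p ξ a b = if kb ≤ ka then BRW q p a * ENNReal.ofReal (t b.1) else 0 := by
  unfold BRF
  rw [tsum_eq_single kb ?_]
  · by_cases hc : kb ≤ ka
    · rw [if_pos ⟨hjb, hmb, (looks_le_iff hja hma).2 hc⟩, if_pos hc]
    · rw [if_neg, if_neg hc]
      rintro ⟨-, -, h3⟩
      exact hc ((looks_le_iff hja hma).1 h3)
  · intro k hk
    rw [if_neg]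
    rintro ⟨h1, h2, -⟩
    exact hk (sched_unique h1 hjb (h2.trans hmb.symm))

lemma p_pos_of_W_ne {n : ℕ} {q p : Fin n → ℝ} (hp0 : ∀ j, 0 ≤ p j) {a : Fin n × ℕ}
    (hW : BRW q p a ≠ 0) : 0 < p a.1 := by
  rcases (hp0 a.1).lt_or_eq with h | h
  · exact h
  · exfalso
    apply hW
    have : BRW q p a = ENNReal.ofReal (p a.1 * (1 - q a.1) ^ a.2 * q a.1) := rfl
    rw [this, ← h]
    simp

lemma W_ne_of_p_pos {n : ℕ} {q p : Fin n → ℝ} (hq0 : ∀ j, 0 < q j) (hq1 : ∀ j, q j < 1)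
    {a : Fin n × ℕ} (hp : 0 < p a.1) : BRW q p a ≠ 0 := by
  have h1 : (0:ℝ) < 1 - q a.1 := by linarith [hq1 a.1]
  have h2 := hq0 a.1
  have : (0:ℝ) < p a.1 * (1 - q a.1) ^ a.2 * q a.1 := by positivity
  exact (ENNReal.ofReal_pos.2 this).ne'

section Main

variable {n : ℕ} {t q p : Fin n → ℝ} {ξs : ℕ → Fin n}

lemma psi_anti (hmono : ∀ k : ℕ,
      p (ξs (k + 1)) * (1 - q (ξs (k + 1))) ^ looks ξs (ξs (k + 1)) (k + 1) * q (ξs (k + 1))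
          / t (ξs (k + 1)) ≤
        p (ξs k) * (1 - q (ξs k)) ^ looks ξs (ξs k) k * q (ξs k) / t (ξs k)) :
    Antitone (fun k => p (ξs k) * (1 - q (ξs k)) ^ looks ξs (ξs k) k * q (ξs k) / t (ξs k)) :=
  antitone_nat_of_succ_le hmono

lemma xs_pos (ht : ∀ j, 0 < t j) (hq0 : ∀ j, 0 < q j) (hq1 : ∀ j, q j < 1)
    (hp0 : ∀ j, 0 ≤ p j) (hp1 : ∑ j, p j = 1)
    (ha : ∀ j : Fin n, 0 < p j → {k : ℕ | ξs k = j}.Infinite)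
    (hmono : ∀ k : ℕ,
      p (ξs (k + 1)) * (1 - q (ξs (k + 1))) ^ looks ξs (ξs (k + 1)) (k + 1) * q (ξs (k + 1))
          / t (ξs (k + 1)) ≤
        p (ξs k) * (1 - q (ξs k)) ^ looks ξs (ξs k) k * q (ξs k) / t (ξs k)) :
    ∀ k, 0 < p (ξs k) := by
  intro k
  obtain ⟨j, -, hj⟩ := Finset.exists_ne_zero_of_sum_ne_zero (f := p) (s := Finset.univ)
    (by rw [hp1]; exact one_ne_zero)
  have hpj : 0 < p j := (hp0 j).lt_of_ne (Ne.symm hj)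
  rcases (hp0 (ξs k)).lt_or_eq with h | h
  · exact h
  · exfalso
    obtain ⟨k', hk', hkk'⟩ := (ha j hpj).exists_gt k
    have hle := psi_anti hmono hkk'.le
    simp only [Set.mem_setOf_eq] at hk'
    dsimp only at hle
    rw [hk'] at hle
    have hψk : p (ξs k) * (1 - q (ξs k)) ^ looks ξs (ξs k) k * q (ξs k) / t (ξs k) = 0 := by
      rw [← h]; ring
    rw [hψk] at hle
    have h1 : (0:ℝ) < 1 - q j := by linarith [hq1 j]
    have h2 := hq0 j
    have h3 := ht j
    have : (0:ℝ) < p j * (1 - q j) ^ looks ξs j k' * q j / t j := by positivity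
    linarith

lemma cross_ineq (ht : ∀ j, 0 < t j) (hq0 : ∀ j, 0 < q j) (hq1 : ∀ j, q j < 1)
    (hp0 : ∀ j, 0 ≤ p j)
    (hmono : ∀ k : ℕ,
      p (ξs (k + 1)) * (1 - q (ξs (k + 1))) ^ looks ξs (ξs (k + 1)) (k + 1) * q (ξs (k + 1))
          / t (ξs (k + 1)) ≤
        p (ξs k) * (1 - q (ξs k)) ^ looks ξs (ξs k) k * q (ξs k) / t (ξs k))
    {a b : Fin n × ℕ} {ka kb : ℕ}
    (hja : ξs ka = a.1) (hma : looks ξs a.1 ka = a.2)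
    (hjb : ξs kb = b.1) (hmb : looks ξs b.1 kb = b.2) (hkk : kb ≤ ka) :
    BRW q p a * ENNReal.ofReal (t b.1) ≤ BRW q p b * ENNReal.ofReal (t a.1) := by
  have h := psi_anti hmono hkk
  dsimp only at h
  rw [hja, hjb] at h
  rw [hma, hmb, div_le_div_iff₀ (ht a.1) (ht b.1)] at h
  have hwa : (0:ℝ) ≤ p a.1 * (1 - q a.1) ^ a.2 * q a.1 := by
    have h1 : (0:ℝ) < 1 - q a.1 := by linarith [hq1 a.1]
    have h2 := hp0 a.1
    have h3 := (hq0 a.1).le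
    positivity
  have hwb : (0:ℝ) ≤ p b.1 * (1 - q b.1) ^ b.2 * q b.1 := by
    have h1 : (0:ℝ) < 1 - q b.1 := by linarith [hq1 b.1]
    have h2 := hp0 b.1
    have h3 := (hq0 b.1).le
    positivity
  have e1 : BRW q p a * ENNReal.ofReal (t b.1) =
      ENNReal.ofReal ((p a.1 * (1 - q a.1) ^ a.2 * q a.1) * t b.1) := by
    rw [ENNReal.ofReal_mul hwa]; rfl
  have e2 : BRW q p b * ENNReal.ofReal (t a.1) =
      ENNReal.ofReal ((p b.1 * (1 - q b.1) ^ b.2 * q b.1) * t a.1) := by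
    rw [ENNReal.ofReal_mul hwb]; rfl
  rw [e1, e2]
  exact ENNReal.ofReal_le_ofReal h

end Main

lemma pointwise_le {n : ℕ} {t q p : Fin n → ℝ} {ξs ξ : ℕ → Fin n}
    (ht : ∀ j, 0 < t j) (hq0 : ∀ j, 0 < q j) (hq1 : ∀ j, q j < 1)
    (hp0 : ∀ j, 0 ≤ p j) (hp1 : ∑ j, p j = 1)
    (ha : ∀ j : Fin n, 0 < p j → {k : ℕ | ξs k = j}.Infinite)
    (hmono : ∀ k : ℕ,
      p (ξs (k + 1)) * (1 - q (ξs (k + 1))) ^ looks ξs (ξs (k + 1)) (k + 1) * q (ξs (k + 1))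
          / t (ξs (k + 1)) ≤
        p (ξs k) * (1 - q (ξs k)) ^ looks ξs (ξs k) k * q (ξs k) / t (ξs k))
    (hξ : ∀ j : Fin n, 0 < p j → {k : ℕ | ξ k = j}.Infinite)
    (a b : Fin n × ℕ) :
    BRF t q p ξs a b + BRF t q p ξs b a ≤ BRF t q p ξ a b + BRF t q p ξ b a := by
  have hxs := xs_pos ht hq0 hq1 hp0 hp1 ha hmono
  have hnot_sched : ∀ c : Fin n × ℕ, BRW q p c = 0 →
      ∀ k, ¬(ξs k = c.1 ∧ looks ξs c.1 k = c.2) := by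
    rintro c hc k ⟨h1, -⟩
    exact W_ne_of_p_pos hq0 hq1 (h1 ▸ hxs k) hc
  by_cases hWa : BRW q p a = 0
  · rw [BRF_eq_zero_of_W_eq_zero t q p ξs hWa b,
      BRF_eq_zero_of_not_sched t q p ξs b (hnot_sched a hWa)]
    simp
  by_cases hWb : BRW q p b = 0
  · rw [BRF_eq_zero_of_W_eq_zero t q p ξs hWb a,
      BRF_eq_zero_of_not_sched t q p ξs a (hnot_sched b hWb)]
    simp
  have hpa : 0 < p a.1 := p_pos_of_W_ne hp0 hWa
  have hpb : 0 < p b.1 := p_pos_of_W_ne hp0 hWb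
  obtain ⟨kas, hjas, hmas⟩ := exists_sched (ha a.1 hpa) a.2
  obtain ⟨kbs, hjbs, hmbs⟩ := exists_sched (ha b.1 hpb) b.2
  obtain ⟨ka, hja, hma⟩ := exists_sched (hξ a.1 hpa) a.2
  obtain ⟨kb, hjb, hmb⟩ := exists_sched (hξ b.1 hpb) b.2
  rw [BRF_eq_of_sched t q p ξs hjas hmas hjbs hmbs,
    BRF_eq_of_sched t q p ξs hjbs hmbs hjas hmas,
    BRF_eq_of_sched t q p ξ hja hma hjb hmb,
    BRF_eq_of_sched t q p ξ hjb hmb hja hma]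
  by_cases hab : a = b
  · subst hab
    have e1 : kbs = kas := sched_unique hjbs hjas (hmbs.trans hmas.symm)
    have e2 : kb = ka := sched_unique hjb hja (hmb.trans hma.symm)
    rw [e1, e2]
    simp
  have hks : kas ≠ kbs := by
    intro he
    apply hab
    have h1 : a.1 = b.1 := by rw [← hjas, ← hjbs, he]
    have h2 : a.2 = b.2 := by rw [← hmas, ← hmbs, he, h1]
    exact Prod.ext_iff.2 ⟨h1, h2⟩
  have hk : ka ≠ kb := by
    intro he
    apply hab
    have h1 : a.1 = b.1 := by rw [← hja, ← hjb, he]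
    have h2 : a.2 = b.2 := by rw [← hma, ← hmb, he, h1]
    exact Prod.ext_iff.2 ⟨h1, h2⟩
  rcases Nat.lt_or_ge kbs kas with h | h
  · -- b scheduled before a in ξs : LHS = Wa * Tb
    rw [if_pos h.le, if_neg (by omega)]
    have hcross := cross_ineq ht hq0 hq1 hp0 hmono hjas hmas hjbs hmbs h.le
    rcases Nat.lt_or_ge kb ka with h2 | h2
    · rw [if_pos h2.le, if_neg (by omega)]
    · have h2' : ka < kb := by omega
      rw [if_neg (by omega), if_pos h2'.le]
      simpa using hcross
  · have h' : kas < kbs := by omega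
    rw [if_neg (by omega), if_pos h'.le]
    have hcross := cross_ineq ht hq0 hq1 hp0 hmono hjbs hmbs hjas hmas h'.le
    rcases Nat.lt_or_ge kb ka with h2 | h2
    · rw [if_pos h2.le, if_neg (by omega)]
      simpa using hcross
    · have h2' : ka < kb := by omega
      rw [if_neg (by omega), if_pos h2'.le]

lemma mixed_eq_top {n : ℕ} {t q p : Fin n → ℝ} {ξ : ℕ → Fin n}
    (ht : ∀ j, 0 < t j) (hq0 : ∀ j, 0 < q j) (hq1 : ∀ j, q j < 1) (hp0 : ∀ j, 0 ≤ p j)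
    {j : Fin n} (hpj : 0 < p j) (hfin : ¬{k : ℕ | ξ k = j}.Infinite) :
    mixedSearchTime t q p ξ = ⊤ := by
  rw [Set.not_infinite] at hfin
  have hq' : (0:ℝ) ≤ 1 - q j := by linarith [hq1 j]
  have hq'' : 1 - q j ≤ 1 := by linarith [hq0 j]
  set M := hfin.toFinset.card with hM
  have hlooks : ∀ k, looks ξ j k ≤ M := by
    intro k
    refine Finset.card_le_card fun x hx => ?_
    rw [Set.Finite.mem_toFinset]
    exact (Finset.mem_filter.1 hx).2
  have hne : (Finset.univ : Finset (Fin n)).Nonempty := ⟨j, Finset.mem_univ j⟩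
  set tm := Finset.univ.inf' hne t with htmdef
  have htm : 0 < tm := by
    rw [htmdef, Finset.lt_inf'_iff]
    exact fun b _ => ht b
  have hε : 0 < tm * (1 - q j) ^ M := by
    rcases (lt_or_eq_of_le hq') with h | h
    · positivity
    · -- 1 - q j = 0 impossible? no! q j < 1 strict so 0 < 1 - q j
      exfalso; linarith [hq1 j]
  have hst : searchTime t q j ξ = ⊤ := by
    rw [eq_top_iff, ← ENNReal.tsum_const_eq_top_of_ne_zero
      (α := ℕ) (c := ENNReal.ofReal (tm * (1 - q j) ^ M))
      ((ENNReal.ofReal_pos.2 hε).ne')]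
    refine ENNReal.tsum_le_tsum fun k => ENNReal.ofReal_le_ofReal ?_
    exact mul_le_mul (Finset.inf'_le t (Finset.mem_univ (ξ k)))
      (pow_le_pow_of_le_one hq' hq'' (hlooks k))
      (pow_nonneg hq' M) (ht (ξ k)).le
  rw [eq_top_iff]
  calc (⊤ : ℝ≥0∞) = ENNReal.ofReal (p j) * searchTime t q j ξ := by
        rw [hst, ENNReal.mul_top ((ENNReal.ofReal_pos.2 hpj).ne')]
    _ ≤ mixedSearchTime t q p ξ := by
        rw [mixedSearchTime]
        exact Finset.single_le_sum (f := fun i => ENNReal.ofReal (p i) * searchTime t q i ξ)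
          (fun i _ => zero_le) (Finset.mem_univ j)

/-- Gittins-index optimality of the best response. Assume all detection
probabilities are less than `1` and fix a mixed Hider strategy `p`. If `ξs` visits every
box `j` with `p j > 0` infinitely often, and the indices
`ψ_{j,m} = p_j (1−q_j)^{m−1} q_j / t_j` are non-increasing along `ξs` (where the look at
position `k` is the `(N_{ξs(k)}(ξs,k)+1)`-th look in box `ξs k`), then `ξs` minimizes the
expected search time against `p`. -/
theorem index_policy_is_best_response
    {n : ℕ} (t q : Fin n → ℝ) (ht : ∀ j, 0 < t j) (hq0 : ∀ j, 0 < q j) (hq1 : ∀ j, q j < 1)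
    (p : Fin n → ℝ) (hp0 : ∀ j, 0 ≤ p j) (hp1 : ∑ j, p j = 1)
    (ξs : ℕ → Fin n)
    (ha : ∀ j : Fin n, 0 < p j → {k : ℕ | ξs k = j}.Infinite)
    (hb : ∀ k : ℕ,
      p (ξs (k + 1)) * (1 - q (ξs (k + 1))) ^ looks ξs (ξs (k + 1)) (k + 1) * q (ξs (k + 1))
          / t (ξs (k + 1)) ≤
        p (ξs k) * (1 - q (ξs k)) ^ looks ξs (ξs k) k * q (ξs k) / t (ξs k)) :
    ∀ ξ : ℕ → Fin n, mixedSearchTime t q p ξs ≤ mixedSearchTime t q p ξ := by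
  intro ξ
  by_cases hξ : ∀ j : Fin n, 0 < p j → {k : ℕ | ξ k = j}.Infinite
  · rw [mixed_eq_BRF t q p ht hq0 hq1 hp0 ξs, mixed_eq_BRF t q p ht hq0 hq1 hp0 ξ]
    have key : ∀ σ : ℕ → Fin n,
        2 * ∑' ab : (Fin n × ℕ) × (Fin n × ℕ), BRF t q p σ ab.1 ab.2 =
        ∑' ab : (Fin n × ℕ) × (Fin n × ℕ),
          (BRF t q p σ ab.1 ab.2 + BRF t q p σ ab.2 ab.1) := by
      intro σ
      rw [ENNReal.tsum_add, two_mul]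
      congr 1
      rw [← (Equiv.prodComm (Fin n × ℕ) (Fin n × ℕ)).tsum_eq
        (f := fun ab : (Fin n × ℕ) × (Fin n × ℕ) => BRF t q p σ ab.1 ab.2)]
      exact tsum_congr fun ab => rfl
    have h2 : 2 * (∑' ab : (Fin n × ℕ) × (Fin n × ℕ), BRF t q p ξs ab.1 ab.2) ≤
        2 * ∑' ab : (Fin n × ℕ) × (Fin n × ℕ), BRF t q p ξ ab.1 ab.2 := by
      rw [key ξs, key ξ]
      exact ENNReal.tsum_le_tsum fun ab =>
        pointwise_le ht hq0 hq1 hp0 hp1 ha hb hξ ab.1 ab.2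
    exact (ENNReal.mul_le_mul_iff_right (by norm_num) ENNReal.ofNat_ne_top).1 h2
  · push_neg at hξ
    obtain ⟨j, hpj, hfin⟩ := hξ
    rw [mixed_eq_top ht hq0 hq1 hp0 hpj (Set.not_infinite.2 hfin)]
    exact le_top
end
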